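/- arXiv:2511.07049 — 2 statements merged into one kernel-verified Lean document; each statement's English description precedes it below -/
import Mathlib

section
/- Fix D ≥ 1, a temperature τ > 0, a batch size n ≥ 1, an index i ∈ {1,…,n}, clean embeddings z_1, …, z_n ∈ ℝ^D, and fixed adversarial embeddings w_j ∈ ℝ^D for each j ≠ i. Then for every w₀ ∈ ℝ^D, the gradient of the per-sample clean→adv contrastive loss g_{c→a} at w₀ equals (1/τ)·(exp(−g_{c→a}(w₀)) − 1)·z_i. -/
/-- The gradient of the per-sample clean→adv contrastive loss
`gca` at any point `w₀` equals `(1/τ)·(exp(−gca(w₀)) − 1)·z_i`. -/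
theorem gradient_clean_to_adv
    (D n : ℕ) (hD : 1 ≤ D) (hn : 1 ≤ n) (τ : ℝ) (hτ : 0 < τ)
    (i : Fin n)
    (z : Fin n → EuclideanSpace ℝ (Fin D))   -- clean embeddings z_1, …, z_n
    (w : Fin n → EuclideanSpace ℝ (Fin D))   -- fixed adversarial embeddings (used for j ≠ i)
    (gca : EuclideanSpace ℝ (Fin D) → ℝ)
    (hgca : ∀ v, gca v =
      -Real.log (Real.exp ((inner ℝ (z i) v : ℝ) / τ) /
        (Real.exp ((inner ℝ (z i) v : ℝ) / τ) +
          ∑ j ∈ Finset.univ.erase i, Real.exp ((inner ℝ (z i) (w j) : ℝ) / τ))))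
    (w₀ : EuclideanSpace ℝ (Fin D)) :
    gradient gca w₀ = ((1 / τ) * (Real.exp (-(gca w₀)) - 1)) • z i := by
  set S : ℝ := ∑ j ∈ Finset.univ.erase i, Real.exp ((inner ℝ (z i) (w j) : ℝ) / τ) with hSdef
  have hS : 0 ≤ S := Finset.sum_nonneg fun _ _ => (Real.exp_pos _).le
  have hden : ∀ u : ℝ, 0 < Real.exp (u / τ) + S := fun u => by positivity
  -- rewrite gca
  have hgca' : ∀ v, gca v =
      Real.log (Real.exp ((inner ℝ (z i) v : ℝ) / τ) + S) - (inner ℝ (z i) v : ℝ) / τ := by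
    intro v
    rw [hgca v, Real.log_div (Real.exp_pos _).ne' (hden _).ne', Real.log_exp]
    ring
  set u₀ : ℝ := (inner ℝ (z i) w₀ : ℝ) with hu₀
  set c : ℝ := (Real.exp (u₀ / τ) * (1 / τ)) / (Real.exp (u₀ / τ) + S) - 1 / τ with hc
  -- derivative of the scalar function
  have h1 : HasDerivAt (fun u : ℝ => u / τ) (1 / τ) u₀ := by
    simpa using (hasDerivAt_id u₀).div_const τ
  have h2 : HasDerivAt (fun u : ℝ => Real.exp (u / τ)) (Real.exp (u₀ / τ) * (1 / τ)) u₀ :=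
    by have := (Real.hasDerivAt_exp (u₀ / τ)).comp u₀ h1; exact this
  have h3 : HasDerivAt (fun u : ℝ => Real.exp (u / τ) + S)
      (Real.exp (u₀ / τ) * (1 / τ)) u₀ := h2.add_const S
  have h4 : HasDerivAt (fun u : ℝ => Real.log (Real.exp (u / τ) + S))
      ((Real.exp (u₀ / τ) * (1 / τ)) / (Real.exp (u₀ / τ) + S)) u₀ := h3.log (hden u₀).ne'
  have h5 : HasDerivAt (fun u : ℝ => Real.log (Real.exp (u / τ) + S) - u / τ) c u₀ :=
    h4.sub h1
  -- the inner map
  have hinner : HasFDerivAt (fun v : EuclideanSpace ℝ (Fin D) => (inner ℝ (z i) v : ℝ))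
      (innerSL ℝ (z i)) w₀ := (innerSL ℝ (z i)).hasFDerivAt
  have hF : HasFDerivAt gca (c • innerSL ℝ (z i)) w₀ := by
    have := h5.comp_hasFDerivAt w₀ hinner
    apply this.congr_of_eventuallyEq
    filter_upwards with v
    simp [hgca' v, Function.comp]
  have hG : HasGradientAt gca (c • z i) w₀ := by
    rw [hasGradientAt_iff_hasFDerivAt]
    refine hF.congr_fderiv ?_
    ext v
    simp [InnerProductSpace.toDual_apply_apply, real_inner_smul_left]
  rw [hG.gradient]
  congr 1
  -- coefficient equality
  have hexp : Real.exp (-(gca w₀)) = Real.exp (u₀ / τ) / (Real.exp (u₀ / τ) + S) := by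
    rw [hgca' w₀, neg_sub, Real.exp_sub, Real.exp_log (hden u₀)]
  rw [hexp, hc]
  field_simp
end

section
/- Fix D ≥ 1, a temperature τ > 0, a batch size n ≥ 1, an index i ∈ {1,…,n}, clean embeddings z_1, …, z_n ∈ ℝ^D, and fixed adversarial embeddings w_j ∈ ℝ^D for each j ≠ i. Let w₀ ∈ ℝ^D and set q_j(w₀) = exp(⟨w₀, z_j⟩/τ) / Σ_{k=1}^n exp(⟨w₀, z_k⟩/τ). If the weighted sum Σ_{j≠i} q_j(w₀)·z_j is not a scalar multiple of z_i (i.e., it does not lie in the linear span of z_i), then the gradient of the per-sample clean→adv contrastive loss g_{c→a} at w₀ is different from the gradient of the per-sample adv→clean contrastive loss g_{a→c} at w₀; in fact, the gradient of g_{c→a} at w₀ lies in the linear span of z_i while the gradient of g_{a→c} at w₀ does not. -/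
set_option maxHeartbeats 1000000


/-- gradient asymmetry, Theorem 2. If the weighted sum
`Σ_{j≠i} q_j(w₀)·z_j` does not lie in the linear span of `z_i`, then the gradients
of the two single-direction contrastive losses at `w₀` differ; in fact the gradient
of `gca` lies in the span of `z_i` while the gradient of `gac` does not. -/
theorem gradient_asymmetry
    (D n : ℕ) (hD : 1 ≤ D) (hn : 1 ≤ n) (τ : ℝ) (hτ : 0 < τ)
    (i : Fin n)
    (z : Fin n → EuclideanSpace ℝ (Fin D))   -- clean embeddings z_1, …, z_n
    (w : Fin n → EuclideanSpace ℝ (Fin D))   -- fixed adversarial embeddings (used for j ≠ i)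
    (gca gac : EuclideanSpace ℝ (Fin D) → ℝ)
    (hgca : ∀ v, gca v =
      -Real.log (Real.exp ((inner ℝ (z i) v) / τ) /
        (Real.exp ((inner ℝ (z i) v) / τ) +
          ∑ j ∈ Finset.univ.erase i, Real.exp ((inner ℝ (z i) (w j)) / τ))))
    (hgac : ∀ v, gac v =
      -Real.log (Real.exp ((inner ℝ v (z i)) / τ) /
        ∑ j, Real.exp ((inner ℝ v (z j)) / τ)))
    (q : EuclideanSpace ℝ (Fin D) → Fin n → ℝ)
    (hq : ∀ v j, q v j =
      Real.exp ((inner ℝ v (z j)) / τ) / ∑ k, Real.exp ((inner ℝ v (z k)) / τ))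
    (w₀ : EuclideanSpace ℝ (Fin D))
    (hspan : (∑ j ∈ Finset.univ.erase i, q w₀ j • z j) ∉ Submodule.span ℝ {z i}) :
    gradient gca w₀ ≠ gradient gac w₀ ∧
    gradient gca w₀ ∈ Submodule.span ℝ {z i} ∧
    gradient gac w₀ ∉ Submodule.span ℝ {z i} := by
  classical
  have hτ' : τ ≠ 0 := ne_of_gt hτ
  haveI : Nonempty (Fin n) := ⟨i⟩
  -- derivative of v ↦ ⟪a, v⟫ / τ
  have hA : ∀ a : EuclideanSpace ℝ (Fin D), HasFDerivAt (fun v : EuclideanSpace ℝ (Fin D) => (inner ℝ a v : ℝ) / τ)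
      (τ⁻¹ • (innerSL ℝ a : EuclideanSpace ℝ (Fin D) →L[ℝ] ℝ)) w₀ := by
    intro a
    have := ((innerSL ℝ a : EuclideanSpace ℝ (Fin D) →L[ℝ] ℝ).hasFDerivAt (x := w₀)).const_mul τ⁻¹
    simpa [div_eq_inv_mul] using this
  -- a generic tool: compute the gradient from a HasFDerivAt statement
  have key : ∀ (f : EuclideanSpace ℝ (Fin D) → ℝ) (f' : EuclideanSpace ℝ (Fin D) →L[ℝ] ℝ) (g : EuclideanSpace ℝ (Fin D)),
      HasFDerivAt f f' w₀ → (∀ v, f' v = (inner ℝ g v : ℝ)) → gradient f w₀ = g := by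
    intro f f' g hf hg
    have : HasGradientAt f g w₀ := by
      rw [hasGradientAt_iff_hasFDerivAt]
      have hfg : InnerProductSpace.toDual ℝ (EuclideanSpace ℝ (Fin D)) g = f' :=
        ContinuousLinearMap.ext fun v => by rw [InnerProductSpace.toDual_apply_apply, hg v]
      rw [hfg]
      exact hf
    exact this.gradient
  ----------------------------------------------------------------
  -- the clean→adv loss
  ----------------------------------------------------------------
  set C : ℝ := ∑ j ∈ Finset.univ.erase i, Real.exp ((inner ℝ (z i) (w j) : ℝ) / τ) with hCdef
  have hC0 : 0 ≤ C := Finset.sum_nonneg fun _ _ => (Real.exp_pos _).le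
  have hgca' : gca = fun v =>
      Real.log (Real.exp ((inner ℝ (z i) v : ℝ) / τ) + C) - (inner ℝ (z i) v : ℝ) / τ := by
    funext v
    rw [hgca v, Real.log_div (Real.exp_pos _).ne' (by positivity), Real.log_exp]
    ring
  have hpos : (0:ℝ) < Real.exp ((inner ℝ (z i) w₀ : ℝ) / τ) + C := by positivity
  have hExp : HasFDerivAt (fun v : EuclideanSpace ℝ (Fin D) => Real.exp ((inner ℝ (z i) v : ℝ) / τ) + C)
      (Real.exp ((inner ℝ (z i) w₀ : ℝ) / τ) • (τ⁻¹ • (innerSL ℝ (z i) : EuclideanSpace ℝ (Fin D) →L[ℝ] ℝ))) w₀ :=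
    (hA (z i)).exp.add_const C
  have hlog1 := (Real.hasDerivAt_log hpos.ne').comp_hasFDerivAt w₀ hExp
  have hgcaD : HasFDerivAt gca
      ((Real.exp ((inner ℝ (z i) w₀ : ℝ) / τ) + C)⁻¹ •
        (Real.exp ((inner ℝ (z i) w₀ : ℝ) / τ) • (τ⁻¹ • (innerSL ℝ (z i) : EuclideanSpace ℝ (Fin D) →L[ℝ] ℝ)))
        - τ⁻¹ • (innerSL ℝ (z i) : EuclideanSpace ℝ (Fin D) →L[ℝ] ℝ)) w₀ := by
    rw [hgca']
    exact (hlog1.congr_fderiv rfl).sub (hA (z i))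
  set p : ℝ := Real.exp ((inner ℝ (z i) w₀ : ℝ) / τ) / (Real.exp ((inner ℝ (z i) w₀ : ℝ) / τ) + C)
    with hpdef
  have hgrad1 : gradient gca w₀ = ((p - 1) / τ) • z i := by
    refine key _ _ _ hgcaD ?_
    intro v
    simp only [ContinuousLinearMap.sub_apply, ContinuousLinearMap.smul_apply, innerSL_apply_apply,
      real_inner_smul_left, smul_eq_mul, hpdef]
    field_simp
  ----------------------------------------------------------------
  -- the adv→clean loss
  ----------------------------------------------------------------
  set S : ℝ := ∑ k, Real.exp ((inner ℝ (z k) w₀ : ℝ) / τ) with hSdef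
  have hSpos : 0 < S := Finset.sum_pos (fun _ _ => Real.exp_pos _)
    Finset.univ_nonempty
  have hgac' : gac = fun v =>
      Real.log (∑ k, Real.exp ((inner ℝ (z k) v : ℝ) / τ)) - (inner ℝ (z i) v : ℝ) / τ := by
    funext v
    have hsum : ∑ j, Real.exp ((inner ℝ v (z j) : ℝ) / τ)
        = ∑ k, Real.exp ((inner ℝ (z k) v : ℝ) / τ) :=
      Finset.sum_congr rfl fun k _ => by rw [real_inner_comm]
    have hSv : (0:ℝ) < ∑ k, Real.exp ((inner ℝ (z k) v : ℝ) / τ) :=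
      Finset.sum_pos (fun _ _ => Real.exp_pos _) Finset.univ_nonempty
    rw [hgac v, hsum, Real.log_div (Real.exp_pos _).ne' hSv.ne', Real.log_exp,
      real_inner_comm v (z i)]
    ring
  have hSumD : HasFDerivAt (fun v : EuclideanSpace ℝ (Fin D) => ∑ k, Real.exp ((inner ℝ (z k) v : ℝ) / τ))
      (∑ k, Real.exp ((inner ℝ (z k) w₀ : ℝ) / τ) • (τ⁻¹ • (innerSL ℝ (z k) : EuclideanSpace ℝ (Fin D) →L[ℝ] ℝ))) w₀ :=
    HasFDerivAt.fun_sum fun k _ => (hA (z k)).exp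
  have hlog2 := (Real.hasDerivAt_log hSpos.ne').comp_hasFDerivAt w₀ hSumD
  have hgacD : HasFDerivAt gac
      (S⁻¹ • (∑ k, Real.exp ((inner ℝ (z k) w₀ : ℝ) / τ) • (τ⁻¹ • (innerSL ℝ (z k) : EuclideanSpace ℝ (Fin D) →L[ℝ] ℝ)))
        - τ⁻¹ • (innerSL ℝ (z i) : EuclideanSpace ℝ (Fin D) →L[ℝ] ℝ)) w₀ := by
    rw [hgac']
    exact (hlog2.congr_fderiv rfl).sub (hA (z i))
  have hqval : ∀ k, q w₀ k = Real.exp ((inner ℝ (z k) w₀ : ℝ) / τ) / S := by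
    intro k
    rw [hq w₀ k, real_inner_comm w₀ (z k), hSdef]
    congr 1
    exact Finset.sum_congr rfl fun j _ => by rw [real_inner_comm]
  have hgrad2 : gradient gac w₀ = τ⁻¹ • ((∑ k, q w₀ k • z k) - z i) := by
    refine key _ _ _ hgacD ?_
    intro v
    simp only [ContinuousLinearMap.sub_apply, ContinuousLinearMap.smul_apply,
      ContinuousLinearMap.coe_sum', Finset.sum_apply, innerSL_apply_apply,
      real_inner_smul_left, inner_sub_left, sum_inner, smul_eq_mul]
    rw [Finset.mul_sum]
    have : ∀ k ∈ Finset.univ, S⁻¹ * (Real.exp ((inner ℝ (z k) w₀ : ℝ) / τ) * (τ⁻¹ * (inner ℝ (z k) v : ℝ)))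
        = q w₀ k * (inner ℝ (z k) v : ℝ) * τ⁻¹ := by
      intro k _
      rw [hqval k]
      field_simp
    rw [Finset.sum_congr rfl this]
    rw [mul_sub, Finset.mul_sum]
    congr 1
    exact Finset.sum_congr rfl fun k _ => by ring
  ----------------------------------------------------------------
  -- conclusions
  ----------------------------------------------------------------
  have hmem1 : gradient gca w₀ ∈ Submodule.span ℝ {z i} := by
    rw [hgrad1]
    exact Submodule.mem_span_singleton.2 ⟨(p - 1) / τ, rfl⟩
  have hmem2 : gradient gac w₀ ∉ Submodule.span ℝ {z i} := by
    rw [hgrad2]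
    intro h
    have h1 : (∑ k, q w₀ k • z k) - z i ∈ Submodule.span ℝ {z i} := by
      have := Submodule.smul_mem _ τ h
      rwa [smul_smul, mul_inv_cancel₀ hτ', one_smul] at this
    have h2 : (∑ k, q w₀ k • z k) ∈ Submodule.span ℝ {z i} := by
      have := Submodule.add_mem _ h1 (Submodule.mem_span_singleton_self (z i))
      simpa using this
    have h3 : (∑ j ∈ Finset.univ.erase i, q w₀ j • z j) ∈ Submodule.span ℝ {z i} := by
      have hsplit : q w₀ i • z i + ∑ j ∈ Finset.univ.erase i, q w₀ j • z j
          = ∑ k, q w₀ k • z k :=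
        Finset.add_sum_erase Finset.univ (fun k => q w₀ k • z k) (Finset.mem_univ i)
      have := Submodule.sub_mem _ h2
        (Submodule.smul_mem _ (q w₀ i) (Submodule.mem_span_singleton_self (z i)))
      rw [← hsplit] at this
      simpa using this
    exact hspan h3
  refine ⟨?_, hmem1, hmem2⟩
  intro h
  exact hmem2 (h ▸ hmem1)
end
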